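/- Every nonempty k-negative path of length 2n factors uniquely as either (i) an up-step, followed by a Dyck path of length 2p−2, a down-step, and a k-negative path of length 2n−2p for some 1 ≤ p ≤ n−k, or (ii) a down-step, followed by a negative Dyck path of length 2q−2, an up-step, and a (k−q)-negative path of length 2n−2q for some 1 ≤ q ≤ k. -/

import Mathlib

/-- A sequence of ±1 steps. -/
def IsStepSeq (s : List ℤ) : Prop := ∀ a ∈ s, a = 1 ∨ a = -1

/-- Height after the first `p` steps. -/
def psumL (s : List ℤ) (p : ℕ) : ℤ := (s.take p).sum

/-- A Dyck path: ±1 steps, ends at height 0, never goes below the x-axis. -/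
def IsDyck (s : List ℤ) : Prop := IsStepSeq s ∧ s.sum = 0 ∧ ∀ p, 0 ≤ psumL s p

/-- A negative Dyck path: ±1 steps, ends at height 0, never goes above the x-axis. -/
def IsNegDyck (s : List ℤ) : Prop := IsStepSeq s ∧ s.sum = 0 ∧ ∀ p, psumL s p ≤ 0

/-- Number of steps below the x-axis (step `i` goes from `psumL s i` to `psumL s (i+1)`). -/
def belowCountL (s : List ℤ) : ℕ :=
  ((Finset.range s.length).filter fun i => min (psumL s i) (psumL s (i + 1)) < 0).card

/-- A k-negative path of length 2n: from (0,0) to (2n,0) with exactly 2k steps below the axis. -/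
def IsKNeg (n k : ℕ) (s : List ℤ) : Prop :=
  IsStepSeq s ∧ s.length = 2 * n ∧ s.sum = 0 ∧ belowCountL s = 2 * k

/-! ### Auxiliary lemmas -/

lemma psumL_zero' (s : List ℤ) : psumL s 0 = 0 := rfl

lemma psumL_cons (a : ℤ) (t : List ℤ) (m : ℕ) : psumL (a :: t) (m+1) = a + psumL t m := by
  simp [psumL, List.take_succ_cons]

lemma psumL_of_le (s : List ℤ) (m : ℕ) (h : s.length ≤ m) : psumL s m = s.sum := by
  simp [psumL, List.take_of_length_le h]

lemma psumL_append_of_le (u v : List ℤ) (m : ℕ) (h : m ≤ u.length) :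
    psumL (u ++ v) m = psumL u m := by
  simp [psumL, List.take_append_of_le_length h]

lemma psumL_append_add (u v : List ℤ) (m : ℕ) :
    psumL (u ++ v) (u.length + m) = u.sum + psumL v m := by
  simp [psumL, List.take_append, List.sum_append, List.take_of_length_le (Nat.le_add_right u.length m)]

lemma psumL_step (s : List ℤ) (m : ℕ) (h : m < s.length) :
    psumL s (m+1) = psumL s m + s.get ⟨m, h⟩ := by
  unfold psumL
  rw [List.take_succ, List.sum_append, List.getElem?_eq_getElem h]
  simp

lemma length_even (s : List ℤ) (hs : IsStepSeq s) (h0 : s.sum = 0) : Even s.length := by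
  have key : ∀ t : List ℤ, IsStepSeq t → (t.sum - t.length) % 2 = 0 := by
    intro t
    induction t with
    | nil => intro _; rfl
    | cons a u ih =>
      intro h
      have ha := h a List.mem_cons_self
      have hu : IsStepSeq u := fun b hb => h b (List.mem_cons_of_mem a hb)
      have := ih hu
      rcases ha with rfl | rfl <;>
        · simp only [List.sum_cons, List.length_cons] at *
          push_cast
          omega
  have := key s hs
  rw [h0] at this
  have h2 : (2:ℤ) ∣ (s.length : ℤ) := by omega
  rcases h2 with ⟨c, hc⟩
  refine ⟨c.toNat, ?_⟩
  omega

lemma belowCountL_le (s : List ℤ) : belowCountL s ≤ s.length := by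
  classical
  calc belowCountL s ≤ (Finset.range s.length).card := Finset.card_filter_le _ _
  _ = s.length := Finset.card_range _

lemma belowCountL_of_nonneg (s : List ℤ) (h : ∀ m, 0 ≤ psumL s m) : belowCountL s = 0 := by
  classical
  unfold belowCountL
  rw [Finset.card_eq_zero, Finset.filter_eq_empty_iff]
  intro i _
  simp only [not_lt]
  exact le_min (h i) (h (i+1))

lemma belowCountL_full (s : List ℤ)
    (h : ∀ i, i < s.length → min (psumL s i) (psumL s (i+1)) < 0) :
    belowCountL s = s.length := by
  classical
  unfold belowCountL
  rw [Finset.filter_true_of_mem, Finset.card_range]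
  intro i hi
  exact h i (Finset.mem_range.1 hi)

lemma belowCountL_append (u v : List ℤ) (hu : u.sum = 0) :
    belowCountL (u ++ v) = belowCountL u + belowCountL v := by
  classical
  unfold belowCountL
  rw [List.length_append, Finset.range_add_eq_union, Finset.filter_union,
    Finset.card_union_of_disjoint, Finset.filter_map, Finset.card_map]
  · congr 1
    · congr 1
      apply Finset.filter_congr
      intro i hi
      rw [Finset.mem_range] at hi
      rw [psumL_append_of_le u v i (le_of_lt hi), psumL_append_of_le u v (i+1) hi]
    · congr 1
      apply Finset.filter_congr
      intro i hi
      rw [Finset.mem_range] at hi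
      have h1 : psumL (u ++ v) (addLeftEmbedding u.length i) = psumL v i := by
        show psumL (u ++ v) (u.length + i) = _
        rw [psumL_append_add, hu, zero_add]
      have h2 : psumL (u ++ v) (addLeftEmbedding u.length i + 1) = psumL v (i+1) := by
        show psumL (u ++ v) (u.length + i + 1) = _
        rw [add_assoc, psumL_append_add, hu, zero_add]
      simp only [Function.comp_apply]
      rw [h1, h2]
  · apply Finset.disjoint_filter_filter
    rw [Finset.disjoint_left]
    intro i hi hmem
    rw [Finset.mem_range] at hi
    rw [Finset.mem_map] at hmem
    obtain ⟨j, _, hj⟩ := hmem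
    have : u.length + j = i := hj
    omega

lemma first_passage (t : List ℤ) (hstep : IsStepSeq t) (c : ℤ) (hc : c = 1 ∨ c = -1)
    (hsum : t.sum = c) :
    ∃ Q R, t = Q ++ c :: R ∧ Q.sum = 0 ∧ (∀ m, c * psumL Q m ≤ 0) := by
  classical
  have hPex : ∃ j, psumL t j = c := ⟨t.length, by rw [psumL_of_le t _ le_rfl]; exact hsum⟩
  set j := Nat.find hPex with hjdef
  have hj : psumL t j = c := Nat.find_spec hPex
  have hmin : ∀ m, m < j → psumL t m ≠ c := fun m hm => Nat.find_min hPex hm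
  have hjle : j ≤ t.length := Nat.find_le (by rw [psumL_of_le t _ le_rfl]; exact hsum)
  have hj0 : 1 ≤ j := by
    rcases Nat.eq_zero_or_pos j with h | h
    · exfalso; rw [h] at hj; rw [psumL_zero'] at hj; rcases hc with rfl | rfl <;> omega
    · exact h
  have claim : ∀ m, m < j → c * psumL t m ≤ 0 := by
    intro m
    induction m with
    | zero => intro _; rw [psumL_zero']; simp
    | succ m ih =>
      intro hm
      have hm' : m < j := Nat.lt_of_succ_lt hm
      have h1 := ih hm'
      have hmlen : m < t.length := by omega
      have he := hstep (t.get ⟨m, hmlen⟩) (t.get_mem _)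
      have hsuc : psumL t (m+1) = psumL t m + t.get ⟨m, hmlen⟩ := psumL_step t m hmlen
      have hne : psumL t (m+1) ≠ c := hmin _ hm
      rw [hsuc] at hne ⊢
      rcases hc with rfl | rfl <;> rcases he with h | h <;> rw [h] at hne ⊢ <;> omega
  have hj1len : j - 1 < t.length := by omega
  have hx := claim (j-1) (by omega)
  have he := hstep (t.get ⟨j-1, hj1len⟩) (t.get_mem _)
  have hsuc : psumL t (j-1+1) = psumL t (j-1) + t.get ⟨j-1, hj1len⟩ := psumL_step t _ hj1len
  have hjfix : j - 1 + 1 = j := by omega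
  rw [hjfix, hj] at hsuc
  have hx0 : psumL t (j-1) = 0 ∧ t.get ⟨j-1, hj1len⟩ = c := by
    rcases hc with rfl | rfl <;> rcases he with h | h <;> rw [h] at hsuc ⊢ <;> omega
  refine ⟨t.take (j-1), t.drop j, ?_, hx0.1, ?_⟩
  · have hd : t.drop (j-1) = c :: t.drop j := by
      rw [List.drop_eq_getElem_cons hj1len]
      rw [hjfix, ← hx0.2]
      rfl
    conv_lhs => rw [← List.take_append_drop (j-1) t, hd]
  · intro m
    have hQ : psumL (t.take (j-1)) m = psumL t (min m (j-1)) := by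
      unfold psumL
      rw [List.take_take]
    rw [hQ]
    exact claim _ (by omega)

lemma uniq_aux (c : ℤ) (hc : c = 1 ∨ c = -1) (Q1 R1 Q2 R2 : List ℤ)
    (h1 : ∀ m, c * psumL Q1 m ≤ 0) (h2 : ∀ m, c * psumL Q2 m ≤ 0)
    (s1 : Q1.sum = 0) (s2 : Q2.sum = 0)
    (heq : Q1 ++ c :: R1 = Q2 ++ c :: R2) : Q1 = Q2 ∧ R1 = R2 := by
  have key : ∀ (A B X Y : List ℤ), A.sum = 0 → (∀ m, c * psumL B m ≤ 0) →
      A ++ c :: X = B ++ c :: Y → ¬ (A.length < B.length) := by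
    intro A B X Y hA hB he hlt
    have e1 : psumL (A ++ c :: X) (A.length + 1) = c := by
      rw [psumL_append_add, hA, psumL_cons, psumL_zero']
      ring
    rw [he] at e1
    rw [psumL_append_of_le _ _ _ (by omega)] at e1
    have := hB (A.length + 1)
    rw [e1] at this
    rcases hc with rfl | rfl <;> omega
  have hlen : Q1.length = Q2.length := by
    have n1 := key Q1 Q2 R1 R2 s1 h2 heq
    have n2 := key Q2 Q1 R2 R1 s2 h1 heq.symm
    omega
  obtain ⟨hQ, hR⟩ := List.append_inj heq hlen
  exact ⟨hQ, by injection hR⟩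

/-- Every nonempty k-negative path of length 2n factors uniquely as either
(i) an up-step, a Dyck path of length 2p−2, a down-step, and a k-negative path of
length 2n−2p for some 1 ≤ p ≤ n−k, or (ii) a down-step, a negative Dyck path of
length 2q−2, an up-step, and a (k−q)-negative path of length 2n−2q for some 1 ≤ q ≤ k. -/
theorem kNeg_prime_factorization (n k : ℕ) (hn : 1 ≤ n) (hk : k ≤ n)
    (s : List ℤ) (hs : IsKNeg n k s) :
    ∃! QR : List ℤ × List ℤ,
      (∃ p : ℕ, 1 ≤ p ∧ p ≤ n - k ∧ IsDyck QR.1 ∧ QR.1.length = 2 * p - 2 ∧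
        IsKNeg (n - p) k QR.2 ∧ s = 1 :: (QR.1 ++ (-1) :: QR.2)) ∨
      (∃ q : ℕ, 1 ≤ q ∧ q ≤ k ∧ IsNegDyck QR.1 ∧ QR.1.length = 2 * q - 2 ∧
        IsKNeg (n - q) (k - q) QR.2 ∧ s = (-1) :: (QR.1 ++ 1 :: QR.2)) := by
  obtain ⟨hstep, hlen, hsum, hbelow⟩ := hs
  have hne : s ≠ [] := by
    intro h
    rw [h] at hlen
    simp at hlen
    omega
  -- uniqueness, proved first for any two satisfying pairs
  have huniq : ∀ QR1 QR2 : List ℤ × List ℤ,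
      ((∃ p : ℕ, 1 ≤ p ∧ p ≤ n - k ∧ IsDyck QR1.1 ∧ QR1.1.length = 2 * p - 2 ∧
        IsKNeg (n - p) k QR1.2 ∧ s = 1 :: (QR1.1 ++ (-1) :: QR1.2)) ∨
      (∃ q : ℕ, 1 ≤ q ∧ q ≤ k ∧ IsNegDyck QR1.1 ∧ QR1.1.length = 2 * q - 2 ∧
        IsKNeg (n - q) (k - q) QR1.2 ∧ s = (-1) :: (QR1.1 ++ 1 :: QR1.2))) →
      ((∃ p : ℕ, 1 ≤ p ∧ p ≤ n - k ∧ IsDyck QR2.1 ∧ QR2.1.length = 2 * p - 2 ∧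
        IsKNeg (n - p) k QR2.2 ∧ s = 1 :: (QR2.1 ++ (-1) :: QR2.2)) ∨
      (∃ q : ℕ, 1 ≤ q ∧ q ≤ k ∧ IsNegDyck QR2.1 ∧ QR2.1.length = 2 * q - 2 ∧
        IsKNeg (n - q) (k - q) QR2.2 ∧ s = (-1) :: (QR2.1 ++ 1 :: QR2.2))) →
      QR1 = QR2 := by
    rintro ⟨Q1, R1⟩ ⟨Q2, R2⟩
        (⟨p1, _, _, ⟨_, hq1sum, hq1pos⟩, _, _, he1⟩ | ⟨q1, _, _, ⟨_, hq1sum, hq1neg⟩, _, _, he1⟩)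
        (⟨p2, _, _, ⟨_, hq2sum, hq2pos⟩, _, _, he2⟩ | ⟨q2, _, _, ⟨_, hq2sum, hq2neg⟩, _, _, he2⟩)
    · have heq : Q1 ++ (-1) :: R1 = Q2 ++ (-1) :: R2 := by
        have := he1.symm.trans he2
        injection this
      obtain ⟨hQ, hR⟩ := uniq_aux (-1) (Or.inr rfl) Q1 R1 Q2 R2
        (fun m => by have h : 0 ≤ psumL Q1 m := hq1pos m; omega)
        (fun m => by have h : 0 ≤ psumL Q2 m := hq2pos m; omega)
        hq1sum hq2sum heq
      simp [hQ, hR]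
    · exfalso
      have := he1.symm.trans he2
      have h1 : (1 : ℤ) = -1 := by injection this
      norm_num at h1
    · exfalso
      have := he1.symm.trans he2
      have h1 : (-1 : ℤ) = 1 := by injection this
      norm_num at h1
    · have heq : Q1 ++ (1:ℤ) :: R1 = Q2 ++ 1 :: R2 := by
        have := he1.symm.trans he2
        injection this
      obtain ⟨hQ, hR⟩ := uniq_aux 1 (Or.inl rfl) Q1 R1 Q2 R2
        (fun m => by have h : psumL Q1 m ≤ 0 := hq1neg m; omega)
        (fun m => by have h : psumL Q2 m ≤ 0 := hq2neg m; omega)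
        hq1sum hq2sum heq
      simp [hQ, hR]
  obtain ⟨a, t, rfl⟩ := List.exists_cons_of_ne_nil hne
  have hstept : IsStepSeq t := fun b hb => hstep b (List.mem_cons_of_mem a hb)
  have ha := hstep a List.mem_cons_self
  rw [List.sum_cons] at hsum
  rw [List.length_cons] at hlen
  rcases ha with rfl | rfl
  · -- first step is up
    have htsum : t.sum = -1 := by omega
    obtain ⟨Q, R, rfl, hQsum, hQpos⟩ := first_passage t hstept (-1) (Or.inr rfl) htsum
    have hQpos' : ∀ m, 0 ≤ psumL Q m := fun m => by have := hQpos m; omega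
    have hQstep : IsStepSeq Q := fun b hb => hstept b (List.mem_append_left _ hb)
    have hRstep : IsStepSeq R := fun b hb =>
      hstept b (List.mem_append_right _ (List.mem_cons_of_mem _ hb))
    obtain ⟨cq, hcq⟩ := length_even Q hQstep hQsum
    have hRsum : R.sum = 0 := by
      rw [List.sum_append, List.sum_cons, hQsum] at hsum
      omega
    have hsplit : (1 : ℤ) :: (Q ++ (-1) :: R) = ((1:ℤ) :: (Q ++ [-1])) ++ R := by simp
    have hBsum : ((1:ℤ) :: (Q ++ [-1])).sum = 0 := by simp [hQsum]
    have hBpos : ∀ m, 0 ≤ psumL ((1:ℤ) :: (Q ++ [-1])) m := by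
      intro m
      cases m with
      | zero => rw [psumL_zero']
      | succ m =>
        rw [psumL_cons]
        by_cases h : m ≤ Q.length
        · rw [psumL_append_of_le _ _ _ h]
          have := hQpos' m
          omega
        · rw [psumL_of_le _ _ (by simp only [List.length_append, List.length_cons, List.length_nil]; omega)]
          simp [hQsum]
    have hbc : belowCountL ((1:ℤ) :: (Q ++ (-1) :: R)) = belowCountL R := by
      rw [hsplit, belowCountL_append _ _ hBsum, belowCountL_of_nonneg _ hBpos, zero_add]
    rw [hbc] at hbelow
    have hlen' : Q.length + 2 + R.length = 2 * n := by
      simp only [List.length_append, List.length_cons, List.length_nil] at hlen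
      omega
    have hRle : belowCountL R ≤ R.length := belowCountL_le R
    have hw1 : (1:ℕ) ≤ cq + 1 := by omega
    have hw2 : cq + 1 ≤ n - k := by omega
    have hQlen : Q.length = 2 * (cq + 1) - 2 := by omega
    have hRlen : R.length = 2 * (n - (cq + 1)) := by omega
    have hKR : IsKNeg (n - (cq + 1)) k R := ⟨hRstep, hRlen, hRsum, hbelow⟩
    refine ⟨⟨Q, R⟩, Or.inl ⟨cq + 1, hw1, hw2, ⟨hQstep, hQsum, hQpos'⟩, hQlen, hKR, rfl⟩, ?_⟩
    intro y hy
    exact huniq y ⟨Q, R⟩ hy (Or.inl ⟨cq + 1, hw1, hw2, ⟨hQstep, hQsum, hQpos'⟩, hQlen, hKR, rfl⟩)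
  · -- first step is down
    have htsum : t.sum = 1 := by omega
    obtain ⟨Q, R, rfl, hQsum, hQneg⟩ := first_passage t hstept 1 (Or.inl rfl) htsum
    have hQneg' : ∀ m, psumL Q m ≤ 0 := fun m => by have := hQneg m; omega
    have hQstep : IsStepSeq Q := fun b hb => hstept b (List.mem_append_left _ hb)
    have hRstep : IsStepSeq R := fun b hb =>
      hstept b (List.mem_append_right _ (List.mem_cons_of_mem _ hb))
    obtain ⟨cq, hcq⟩ := length_even Q hQstep hQsum
    have hRsum : R.sum = 0 := by
      rw [List.sum_append, List.sum_cons, hQsum] at hsum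
      omega
    have hsplit : (-1 : ℤ) :: (Q ++ (1:ℤ) :: R) = ((-1:ℤ) :: (Q ++ [1])) ++ R := by simp
    have hBsum : ((-1:ℤ) :: (Q ++ [1])).sum = 0 := by simp [hQsum]
    have hBlen : ((-1:ℤ) :: (Q ++ [1])).length = Q.length + 2 := by
      simp only [List.length_append, List.length_cons, List.length_nil]
    have hBneg : ∀ i, i < ((-1:ℤ) :: (Q ++ [1])).length →
        min (psumL ((-1:ℤ) :: (Q ++ [1])) i) (psumL ((-1:ℤ) :: (Q ++ [1])) (i+1)) < 0 := by
      have inner : ∀ m, m ≤ Q.length → psumL ((-1:ℤ) :: (Q ++ [1])) (m+1) < 0 := by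
        intro m hm
        rw [psumL_cons, psumL_append_of_le _ _ _ hm]
        have := hQneg' m
        omega
      intro i hi
      rw [hBlen] at hi
      cases i with
      | zero =>
        have := inner 0 (Nat.zero_le _)
        exact min_lt_iff.mpr (Or.inr this)
      | succ i' =>
        have := inner i' (by omega)
        exact min_lt_iff.mpr (Or.inl this)
    have hbc : belowCountL ((-1:ℤ) :: (Q ++ (1:ℤ) :: R)) = Q.length + 2 + belowCountL R := by
      rw [hsplit, belowCountL_append _ _ hBsum, belowCountL_full _ hBneg, hBlen]
    rw [hbc] at hbelow
    have hlen' : Q.length + 2 + R.length = 2 * n := by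
      simp only [List.length_append, List.length_cons, List.length_nil] at hlen
      omega
    have hRle : belowCountL R ≤ R.length := belowCountL_le R
    have hw1 : (1:ℕ) ≤ cq + 1 := by omega
    have hw2 : cq + 1 ≤ k := by omega
    have hQlen : Q.length = 2 * (cq + 1) - 2 := by omega
    have hRlen : R.length = 2 * (n - (cq + 1)) := by omega
    have hRbc : belowCountL R = 2 * (k - (cq + 1)) := by omega
    have hKR : IsKNeg (n - (cq + 1)) (k - (cq + 1)) R := ⟨hRstep, hRlen, hRsum, hRbc⟩
    refine ⟨⟨Q, R⟩, Or.inr ⟨cq + 1, hw1, hw2, ⟨hQstep, hQsum, hQneg'⟩, hQlen, hKR, rfl⟩, ?_⟩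
    intro y hy
    exact huniq y ⟨Q, R⟩ hy (Or.inr ⟨cq + 1, hw1, hw2, ⟨hQstep, hQsum, hQneg'⟩, hQlen, hKR, rfl⟩)
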